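/- Let p be a random variable on [0,1] with E[(2p−1)²] = q, let p̄ = 1−p, and let r̂ be a positive integer. Then for all real z with |z| ≤ 1/(2r̂), E[p·(p·e^z + p̄·e^{−z})^{r̂} + p̄·(p̄·e^z + p·e^{−z})^{r̂}] ≤ e^{q·r̂·z + (1/2)(3q·r̂² + r̂)z²}. -/

import Mathlib

open MeasureTheory

open Real in
/-- `sinh t ≤ t cosh t` for `t ≥ 0`. -/
lemma aux_sinh_le {t : ℝ} (ht : 0 ≤ t) : Real.sinh t ≤ t * Real.cosh t := by
  have key : ∀ x : ℝ, HasDerivAt (fun y => y * Real.cosh y - Real.sinh y) (x * Real.sinh x) x := by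
    intro x
    have h1 : HasDerivAt (fun y : ℝ => y * Real.cosh y) (1 * Real.cosh x + x * Real.sinh x) x :=
      (hasDerivAt_id x).mul (Real.hasDerivAt_cosh x)
    have h2 := h1.sub (Real.hasDerivAt_sinh x)
    exact h2.congr_deriv (by ring)
  have mono : MonotoneOn (fun y => y * Real.cosh y - Real.sinh y) (Set.Ici 0) := by
    apply monotoneOn_of_deriv_nonneg (convex_Ici 0)
    · exact ((continuous_id.mul Real.continuous_cosh).sub Real.continuous_sinh).continuousOn
    · intro x _
      exact ((key x).differentiableAt).differentiableWithinAt
    · intro x hx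
      rw [interior_Ici] at hx
      rw [(key x).deriv]
      exact mul_nonneg hx.le (Real.sinh_nonneg_iff.mpr hx.le)
  have h0 := mono Set.self_mem_Ici (Set.mem_Ici.mpr ht) ht
  simp only [Real.cosh_zero, Real.sinh_zero, zero_mul, sub_zero, mul_zero, zero_sub] at h0
  linarith

/-- `cosh t ≤ 1 + (4/7) t²` for `t² ≤ 1/2`. -/
lemma aux_cosh_le {t : ℝ} (ht : t ^ 2 ≤ 1 / 2) : Real.cosh t ≤ 1 + (4 / 7) * t ^ 2 := by
  have h1 : Real.cosh t = 2 * Real.cosh (t / 2) ^ 2 - 1 := by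
    have := Real.cosh_two_mul (t / 2)
    have h2 := Real.cosh_sq (t / 2)
    rw [show 2 * (t / 2) = t by ring] at this
    rw [this, h2]; ring
  have hs : Real.sinh (t / 2) ^ 2 ≤ (t / 2) ^ 2 * Real.cosh (t / 2) ^ 2 := by
    rcases le_or_gt 0 t with h | h
    · have := aux_sinh_le (by linarith : (0:ℝ) ≤ t / 2)
      have hnn : 0 ≤ Real.sinh (t / 2) := Real.sinh_nonneg_iff.mpr (by linarith)
      nlinarith [Real.cosh_pos (t / 2)]
    · have := aux_sinh_le (by linarith : (0:ℝ) ≤ -t / 2)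
      have hnn : 0 ≤ Real.sinh (-t / 2) := Real.sinh_nonneg_iff.mpr (by linarith)
      have hodd : Real.sinh (-t / 2) = -Real.sinh (t / 2) := by
        rw [show (-t) / 2 = -(t / 2) by ring, Real.sinh_neg]
      have hev : Real.cosh (-t / 2) = Real.cosh (t / 2) := by
        rw [show (-t) / 2 = -(t / 2) by ring, Real.cosh_neg]
      rw [hodd, hev] at this
      rw [hodd] at hnn
      nlinarith [Real.cosh_pos (t / 2)]
  have hsq : Real.cosh (t / 2) ^ 2 = (Real.cosh t + 1) / 2 := by
    rw [h1]; ring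
  have hss : Real.sinh (t / 2) ^ 2 = (Real.cosh t - 1) / 2 := by
    have := Real.cosh_sq (t / 2)
    rw [hsq] at this; linarith
  rw [hss, hsq] at hs
  have hc1 : 1 ≤ Real.cosh t := Real.one_le_cosh t
  nlinarith

lemma aux_sq_le {a b : ℝ} (hab : |a| ≤ |b|) : a ^ 2 ≤ b ^ 2 := by
  rw [← sq_abs a, ← sq_abs b]
  exact pow_le_pow_left₀ (abs_nonneg a) hab 2

set_option maxHeartbeats 1000000 in
/-- Pointwise bound. -/
lemma aux_pointwise (r : ℕ) (hr1 : 1 ≤ (r:ℝ)) (z : ℝ) (hx2 : (r:ℝ) * |z| ≤ 1 / 2)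
    (s : ℝ) (hs : |s| ≤ 1) :
    (1 + s) / 2 * (Real.cosh z + s * Real.sinh z) ^ r
      + (1 - s) / 2 * (Real.cosh z - s * Real.sinh z) ^ r
    ≤ Real.exp ((r:ℝ) * z ^ 2 / 2)
        * (1 + s ^ 2 * ((r:ℝ) * z + (3 / 2) * (r:ℝ) ^ 2 * z ^ 2)) := by
  obtain ⟨c, hc_def⟩ : ∃ c', c' = Real.cosh z := ⟨_, rfl⟩
  obtain ⟨h, hh_def⟩ : ∃ h', h' = Real.sinh z := ⟨_, rfl⟩
  rw [← hc_def, ← hh_def]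
  have hc : 0 < c := by rw [hc_def]; exact Real.cosh_pos z
  have hc1 : 1 ≤ c := by rw [hc_def]; exact Real.one_le_cosh z
  have habs_h : |h| < c := by
    have := Real.sinh_lt_cosh |z|
    rw [← Real.abs_sinh, Real.cosh_abs] at this
    rw [hc_def, hh_def]; exact this
  obtain ⟨w, hw_def⟩ : ∃ w', w' = (r:ℝ) * h / c := ⟨_, rfl⟩
  obtain ⟨x, hx_def⟩ : ∃ x', x' = (r:ℝ) * z := ⟨_, rfl⟩
  have hxabs : |x| ≤ 1 / 2 := by
    rw [hx_def, abs_mul, abs_of_nonneg (by linarith : (0:ℝ) ≤ (r:ℝ))]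
    exact hx2
  -- |w| ≤ |x|
  have hwx : |w| ≤ |x| := by
    rw [hw_def, hx_def, abs_div, abs_mul, abs_mul,
      abs_of_nonneg (by linarith : (0:ℝ) ≤ (r:ℝ)), abs_of_pos hc]
    rw [div_le_iff₀ hc]
    have hsc : |h| ≤ |z| * c := by
      have h1 : Real.sinh |z| ≤ |z| * Real.cosh |z| := aux_sinh_le (abs_nonneg z)
      rw [← Real.abs_sinh, Real.cosh_abs] at h1
      rw [hh_def, hc_def]; exact h1
    calc (r:ℝ) * |h| ≤ (r:ℝ) * (|z| * c) := by
          apply mul_le_mul_of_nonneg_left hsc (by linarith)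
      _ = (r:ℝ) * |z| * c := by ring
  -- step C: for |σ| ≤ 1, (c + σ h)^r ≤ c^r * exp (r * (σ*h/c))
  have stepC : ∀ σ : ℝ, |σ| ≤ 1 → (c + σ * h) ^ r ≤ c ^ r * Real.exp ((r:ℝ) * (σ * h / c)) := by
    intro σ hσ
    have hpos : 0 ≤ c + σ * h := by
      have : |σ * h| ≤ |h| := by
        rw [abs_mul]
        calc |σ| * |h| ≤ 1 * |h| := mul_le_mul_of_nonneg_right hσ (abs_nonneg h)
          _ = |h| := one_mul _
      have := neg_abs_le (σ * h)
      linarith [neg_abs_le (σ * h)]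
    have hstep : c + σ * h ≤ c * Real.exp (σ * h / c) := by
      have h0 := Real.add_one_le_exp (σ * h / c)
      have h1 : c * (σ * h / c + 1) ≤ c * Real.exp (σ * h / c) :=
        mul_le_mul_of_nonneg_left h0 hc.le
      have h2 : c * (σ * h / c + 1) = c + σ * h := by field_simp; ring
      linarith
    calc (c + σ * h) ^ r ≤ (c * Real.exp (σ * h / c)) ^ r :=
          pow_le_pow_left₀ hpos hstep r
      _ = c ^ r * Real.exp ((r:ℝ) * (σ * h / c)) := by
          rw [mul_pow, ← Real.exp_nat_mul]
  have hCs := stepC s hs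
  have hCns := stepC (-s) (by rwa [abs_neg])
  have hexp1 : (r:ℝ) * (s * h / c) = s * w := by rw [hw_def]; ring
  have hexp2 : (r:ℝ) * (-s * h / c) = -(s * w) := by rw [hw_def]; ring
  rw [hexp1] at hCs
  rw [hexp2] at hCns
  -- combine
  have hws : (1 + s) / 2 * (c + s * h) ^ r + (1 - s) / 2 * (c - s * h) ^ r
      ≤ c ^ r * (Real.cosh (s * w) + s * Real.sinh (s * w)) := by
    have e1 : (0:ℝ) ≤ (1 + s) / 2 := by
      have := neg_abs_le s; linarith
    have e2 : (0:ℝ) ≤ (1 - s) / 2 := by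
      have := le_abs_self s; linarith
    have t1 : (1 + s) / 2 * (c + s * h) ^ r ≤ (1 + s) / 2 * (c ^ r * Real.exp (s * w)) :=
      mul_le_mul_of_nonneg_left hCs e1
    have t2 : (1 - s) / 2 * (c - s * h) ^ r ≤ (1 - s) / 2 * (c ^ r * Real.exp (-(s * w))) := by
      have : c - s * h = c + (-s) * h := by ring
      rw [this]
      exact mul_le_mul_of_nonneg_left hCns e2
    have hG : (1 + s) / 2 * (c ^ r * Real.exp (s * w)) + (1 - s) / 2 * (c ^ r * Real.exp (-(s * w)))
        = c ^ r * (Real.cosh (s * w) + s * Real.sinh (s * w)) := by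
      rw [Real.cosh_eq, Real.sinh_eq]; ring
    linarith
  -- bound cosh(sw) + s sinh(sw) ≤ 1 + s²(x + 3/2 x²)
  have hs2 : s ^ 2 ≤ 1 := by
    have := aux_sq_le (a := s) (b := 1) (by simpa using hs)
    simpa using this
  have hwx2 : w ^ 2 ≤ x ^ 2 := aux_sq_le hwx
  have hswsq : (s * w) ^ 2 ≤ x ^ 2 := by
    have h1 : (s * w) ^ 2 ≤ w ^ 2 := by
      linarith [mul_nonneg (by linarith : (0:ℝ) ≤ 1 - s ^ 2) (sq_nonneg w)]
    linarith
  have hx2' : x ^ 2 ≤ 1 / 2 := by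
    rw [← sq_abs x]
    nlinarith [abs_nonneg x]
  have hcosh : Real.cosh (s * w) ≤ 1 + (4 / 7) * (s ^ 2 * x ^ 2) := by
    have := aux_cosh_le (t := s * w) (by linarith)
    have h2 : (s * w) ^ 2 ≤ s ^ 2 * x ^ 2 := by
      linarith [mul_nonneg (sq_nonneg s) (by linarith : (0:ℝ) ≤ x ^ 2 - w ^ 2)]
    linarith
  have hsinh : s * Real.sinh (s * w) ≤ s ^ 2 * (x + (1 / 2) * x ^ 2) := by
    have habs : s * Real.sinh (s * w) = |s| * Real.sinh (|s| * w) := by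
      rcases le_or_gt 0 s with hs0 | hs0
      · rw [abs_of_nonneg hs0]
      · rw [abs_of_neg hs0]
        rw [show -s * w = -(s * w) by ring, Real.sinh_neg]; ring
    rw [habs]
    rcases le_or_gt 0 z with hz0 | hz0
    -- z ≥ 0 : w ≥ 0, w ≤ x
    · have hh0 : 0 ≤ h := by rw [hh_def]; exact Real.sinh_nonneg_iff.mpr hz0
      have hw0 : 0 ≤ w := by
        rw [hw_def]
        exact div_nonneg (mul_nonneg (by linarith) hh0) hc.le
      have hx0 : 0 ≤ x := by
        rw [hx_def]; exact mul_nonneg (by linarith) hz0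
      have hwlex : w ≤ x := by
        have := hwx
        rw [abs_of_nonneg hw0, abs_of_nonneg hx0] at this; exact this
      have h1 : Real.sinh (|s| * w) ≤ |s| * w * Real.cosh (|s| * w) :=
        aux_sinh_le (mul_nonneg (abs_nonneg s) hw0)
      have h2 : Real.cosh (|s| * w) ≤ Real.cosh w := by
        rw [Real.cosh_le_cosh]
        rw [abs_mul, abs_abs, abs_of_nonneg hw0]
        linarith [mul_le_mul_of_nonneg_right hs hw0]
      have h3 : Real.cosh w ≤ 1 + (4 / 7) * x ^ 2 := by
        have := aux_cosh_le (t := w) (by linarith)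
        linarith
      have hcoshpos : 0 < Real.cosh (|s| * w) := Real.cosh_pos _
      calc |s| * Real.sinh (|s| * w) ≤ |s| * (|s| * w * Real.cosh (|s| * w)) := by
            apply mul_le_mul_of_nonneg_left h1 (abs_nonneg s)
        _ = s ^ 2 * (w * Real.cosh (|s| * w)) := by rw [← sq_abs s]; ring
        _ ≤ s ^ 2 * (x + (1 / 2) * x ^ 2) := by
            apply mul_le_mul_of_nonneg_left _ (sq_nonneg s)
            have c1 : w * Real.cosh (|s| * w) ≤ x * Real.cosh (|s| * w) :=
              mul_le_mul_of_nonneg_right hwlex hcoshpos.le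
            have c2 : x * Real.cosh (|s| * w) ≤ x * (1 + (4 / 7) * x ^ 2) :=
              mul_le_mul_of_nonneg_left (le_trans h2 h3) hx0
            have c3 : x * (1 + (4 / 7) * x ^ 2) ≤ x + (1 / 2) * x ^ 2 := by
              have hxle : x ≤ 1 / 2 := by linarith [le_abs_self x]
              linarith [mul_nonneg (by linarith : (0:ℝ) ≤ 1 / 2 - (4 / 7) * x) (sq_nonneg x)]
            linarith
    -- z < 0 : w < 0
    · have hh0 : h < 0 := by rw [hh_def]; exact Real.sinh_neg_iff.mpr hz0
      have hw0 : w < 0 := by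
        rw [hw_def]
        apply div_neg_of_neg_of_pos _ hc
        nlinarith
      have h1 : Real.sinh (|s| * w) ≤ |s| * w := by
        have : |s| * w ≤ 0 := mul_nonpos_of_nonneg_of_nonpos (abs_nonneg s) hw0.le
        exact Real.sinh_le_self_iff.mpr this
      have h2 : |s| * Real.sinh (|s| * w) ≤ s ^ 2 * w := by
        have := mul_le_mul_of_nonneg_left h1 (abs_nonneg s)
        calc |s| * Real.sinh (|s| * w) ≤ |s| * (|s| * w) := this
          _ = s ^ 2 * w := by rw [← sq_abs s]; ring
      have hwle : w ≤ x + (1 / 2) * x ^ 2 := by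
        -- w = r h / c ≤ r z / c = x / c ≤ x (2 - c) ≤ x + |x|(4/7)z² ≤ x + x²/2
        have hsz : h ≤ z := by rw [hh_def]; exact Real.sinh_le_self_iff.mpr hz0.le
        have s1 : w ≤ x / c := by
          rw [hw_def, hx_def, div_le_div_iff₀ hc hc]
          linarith [mul_nonneg (mul_nonneg (by linarith : (0:ℝ) ≤ (r:ℝ)) hc.le)
            (by linarith : (0:ℝ) ≤ z - h)]
        have s2 : x / c ≤ x * (2 - c) := by
          rw [div_le_iff₀ hc]
          have hx0 : x < 0 := by
            rw [hx_def]; exact mul_neg_of_pos_of_neg (by linarith) hz0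
          linarith [mul_nonneg (by linarith : (0:ℝ) ≤ -x) (sq_nonneg (c - 1))]
        have s3 : x * (2 - c) ≤ x + (1 / 2) * x ^ 2 := by
          have hz2x2 : z ^ 2 ≤ x ^ 2 := by
            rw [hx_def]
            linarith [mul_nonneg
              (by linarith [sq_nonneg ((r:ℝ) - 1)] : (0:ℝ) ≤ (r:ℝ) ^ 2 - 1) (sq_nonneg z)]
          have hcle : c ≤ 1 + (4 / 7) * z ^ 2 := by
            rw [hc_def]
            apply aux_cosh_le
            linarith
          have hx0 : x < 0 := by rw [hx_def]; exact mul_neg_of_pos_of_neg (by linarith) hz0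
          -- x(2-c) = x - x(c-1) = x + |x|(c-1) ≤ x + |x| * (4/7) z²
          have : x * (2 - c) = x + (-x) * (c - 1) := by ring
          rw [this]
          have hc47 : c - 1 ≤ (4 / 7) * z ^ 2 := by linarith
          have hnx0 : (0:ℝ) ≤ -x := by linarith
          have e1 : (-x) * (c - 1) ≤ (-x) * ((4 / 7) * z ^ 2) :=
            mul_le_mul_of_nonneg_left hc47 hnx0
          have e2 : (-x) * ((4 / 7) * z ^ 2) ≤ (1 / 2) * x ^ 2 := by
            have hnx : -x ≤ 1 / 2 := by
              have := abs_le.mp hxabs; linarith [this.1]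
            linarith [mul_nonneg (by linarith : (0:ℝ) ≤ 1 / 2 + x) (sq_nonneg z), hz2x2]
          linarith
        linarith
      calc |s| * Real.sinh (|s| * w) ≤ s ^ 2 * w := h2
        _ ≤ s ^ 2 * (x + (1 / 2) * x ^ 2) :=
            mul_le_mul_of_nonneg_left hwle (sq_nonneg s)
  -- now finish
  have hGbound : Real.cosh (s * w) + s * Real.sinh (s * w)
      ≤ 1 + s ^ 2 * (x + (3 / 2) * x ^ 2) := by
    linarith [mul_nonneg (sq_nonneg s) (sq_nonneg x)]
  have hGnn : 0 ≤ Real.cosh (s * w) + s * Real.sinh (s * w) := by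
    have hG : (1 + s) / 2 * Real.exp (s * w) + (1 - s) / 2 * Real.exp (-(s * w))
        = Real.cosh (s * w) + s * Real.sinh (s * w) := by
      rw [Real.cosh_eq, Real.sinh_eq]; ring
    rw [← hG]
    have e1 : (0:ℝ) ≤ (1 + s) / 2 := by have := neg_abs_le s; linarith
    have e2 : (0:ℝ) ≤ (1 - s) / 2 := by have := le_abs_self s; linarith
    exact add_nonneg (mul_nonneg e1 (Real.exp_nonneg _)) (mul_nonneg e2 (Real.exp_nonneg _))
  have hcr : c ^ r ≤ Real.exp ((r:ℝ) * z ^ 2 / 2) := by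
    have h1 : c ≤ Real.exp (z ^ 2 / 2) := by rw [hc_def]; exact Real.cosh_le_exp_half_sq z
    calc c ^ r ≤ Real.exp (z ^ 2 / 2) ^ r := pow_le_pow_left₀ hc.le h1 r
      _ = Real.exp ((r:ℝ) * (z ^ 2 / 2)) := (Real.exp_nat_mul _ r).symm
      _ = Real.exp ((r:ℝ) * z ^ 2 / 2) := by ring_nf
  have hBnn : 0 ≤ 1 + s ^ 2 * (x + (3 / 2) * x ^ 2) := by
    have h1 := (abs_le.mp hxabs).1
    linarith [mul_le_mul_of_nonneg_left h1 (sq_nonneg s),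
      mul_nonneg (sq_nonneg s) (sq_nonneg x), hs2]
  calc (1 + s) / 2 * (c + s * h) ^ r + (1 - s) / 2 * (c - s * h) ^ r
      ≤ c ^ r * (Real.cosh (s * w) + s * Real.sinh (s * w)) := hws
    _ ≤ c ^ r * (1 + s ^ 2 * (x + (3 / 2) * x ^ 2)) :=
        mul_le_mul_of_nonneg_left hGbound (pow_nonneg hc.le r)
    _ ≤ Real.exp ((r:ℝ) * z ^ 2 / 2) * (1 + s ^ 2 * (x + (3 / 2) * x ^ 2)) :=
        mul_le_mul_of_nonneg_right hcr hBnn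
    _ = Real.exp ((r:ℝ) * z ^ 2 / 2) * (1 + s ^ 2 * ((r:ℝ) * z + (3 / 2) * (r:ℝ) ^ 2 * z ^ 2)) := by
        rw [hx_def]; ring

/-- Key MGF lemma: if `p` is a `[0,1]`-valued random variable with `E[(2p−1)²] = q`
and `r̂` a positive integer, then for `|z| ≤ 1/(2r̂)`,
`E[p(p e^z + p̄ e^{−z})^{r̂} + p̄(p̄ e^z + p e^{−z})^{r̂}] ≤ e^{q r̂ z + (1/2)(3q r̂² + r̂) z²}`. -/
theorem worker_mgf_bound {Ω : Type*} [MeasurableSpace Ω] (P : Measure Ω)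
    [IsProbabilityMeasure P] (p : Ω → ℝ) (hmeas : Measurable p)
    (hp : ∀ ω, p ω ∈ Set.Icc (0:ℝ) 1) (q : ℝ)
    (hq : ∫ ω, (2 * p ω - 1) ^ 2 ∂P = q) (rh : ℕ) (hr : 0 < rh)
    (z : ℝ) (hz : |z| ≤ 1 / (2 * rh)) :
    ∫ ω, (p ω * (p ω * Real.exp z + (1 - p ω) * Real.exp (-z)) ^ rh
        + (1 - p ω) * ((1 - p ω) * Real.exp z + p ω * Real.exp (-z)) ^ rh) ∂P
      ≤ Real.exp (q * rh * z + (1 / 2) * (3 * q * rh ^ 2 + rh) * z ^ 2) := by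
  have hr1 : (1:ℝ) ≤ (rh:ℝ) := by exact_mod_cast hr
  have hx2 : (rh:ℝ) * |z| ≤ 1 / 2 := by
    calc (rh:ℝ) * |z| ≤ (rh:ℝ) * (1 / (2 * rh)) :=
          mul_le_mul_of_nonneg_left hz (by linarith)
      _ = 1 / 2 := by field_simp
  set A : ℝ := Real.exp ((rh:ℝ) * z ^ 2 / 2) with hA_def
  set φ : ℝ := (rh:ℝ) * z + (3 / 2) * (rh:ℝ) ^ 2 * z ^ 2 with hφ_def
  have hA_pos : 0 < A := Real.exp_pos _
  -- pointwise bound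
  have key : ∀ ω, p ω * (p ω * Real.exp z + (1 - p ω) * Real.exp (-z)) ^ rh
      + (1 - p ω) * ((1 - p ω) * Real.exp z + p ω * Real.exp (-z)) ^ rh
      ≤ A + (φ * A) * (2 * p ω - 1) ^ 2 := by
    intro ω
    obtain ⟨h0, h1⟩ := hp ω
    have hs : |2 * p ω - 1| ≤ 1 := abs_le.mpr ⟨by linarith, by linarith⟩
    have hpt := aux_pointwise rh hr1 z hx2 (2 * p ω - 1) hs
    have e1 : Real.cosh z + (2 * p ω - 1) * Real.sinh z
        = p ω * Real.exp z + (1 - p ω) * Real.exp (-z) := by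
      rw [Real.cosh_eq, Real.sinh_eq]; ring
    have e2 : Real.cosh z - (2 * p ω - 1) * Real.sinh z
        = (1 - p ω) * Real.exp z + p ω * Real.exp (-z) := by
      rw [Real.cosh_eq, Real.sinh_eq]; ring
    have e3 : (1 + (2 * p ω - 1)) / 2 = p ω := by ring
    have e4 : (1 - (2 * p ω - 1)) / 2 = 1 - p ω := by ring
    rw [e1, e2, e3, e4] at hpt
    calc p ω * (p ω * Real.exp z + (1 - p ω) * Real.exp (-z)) ^ rh
        + (1 - p ω) * ((1 - p ω) * Real.exp z + p ω * Real.exp (-z)) ^ rh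
        ≤ A * (1 + (2 * p ω - 1) ^ 2 * φ) := hpt
      _ = A + (φ * A) * (2 * p ω - 1) ^ 2 := by ring
  -- nonnegativity and boundedness of integrand
  have hbase : ∀ ω, (0 ≤ p ω * Real.exp z + (1 - p ω) * Real.exp (-z)
      ∧ p ω * Real.exp z + (1 - p ω) * Real.exp (-z) ≤ Real.exp |z|)
      ∧ (0 ≤ (1 - p ω) * Real.exp z + p ω * Real.exp (-z)
      ∧ (1 - p ω) * Real.exp z + p ω * Real.exp (-z) ≤ Real.exp |z|) := by
    intro ω
    obtain ⟨h0, h1⟩ := hp ω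
    have he1 : Real.exp z ≤ Real.exp |z| := Real.exp_le_exp.mpr (le_abs_self z)
    have he2 : Real.exp (-z) ≤ Real.exp |z| := Real.exp_le_exp.mpr (by
      have := neg_abs_le z; linarith)
    have hez : 0 < Real.exp z := Real.exp_pos z
    have henz : 0 < Real.exp (-z) := Real.exp_pos (-z)
    refine ⟨⟨?_, ?_⟩, ?_, ?_⟩
    · exact add_nonneg (mul_nonneg h0 hez.le) (mul_nonneg (by linarith) henz.le)
    · nlinarith
    · exact add_nonneg (mul_nonneg (by linarith) hez.le) (mul_nonneg h0 henz.le)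
    · nlinarith
  have hf_nonneg : ∀ ω, 0 ≤ p ω * (p ω * Real.exp z + (1 - p ω) * Real.exp (-z)) ^ rh
      + (1 - p ω) * ((1 - p ω) * Real.exp z + p ω * Real.exp (-z)) ^ rh := by
    intro ω
    obtain ⟨h0, h1⟩ := hp ω
    obtain ⟨⟨b1, _⟩, ⟨b2, _⟩⟩ := hbase ω
    have := pow_nonneg b1 rh
    have := pow_nonneg b2 rh
    nlinarith
  have hf_bdd : ∀ ω, p ω * (p ω * Real.exp z + (1 - p ω) * Real.exp (-z)) ^ rh
      + (1 - p ω) * ((1 - p ω) * Real.exp z + p ω * Real.exp (-z)) ^ rh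
      ≤ 2 * Real.exp |z| ^ rh := by
    intro ω
    obtain ⟨h0, h1⟩ := hp ω
    obtain ⟨⟨b1, c1⟩, ⟨b2, c2⟩⟩ := hbase ω
    have d1 : (p ω * Real.exp z + (1 - p ω) * Real.exp (-z)) ^ rh ≤ Real.exp |z| ^ rh :=
      pow_le_pow_left₀ b1 c1 rh
    have d2 : ((1 - p ω) * Real.exp z + p ω * Real.exp (-z)) ^ rh ≤ Real.exp |z| ^ rh :=
      pow_le_pow_left₀ b2 c2 rh
    have hpow1 : 0 ≤ (p ω * Real.exp z + (1 - p ω) * Real.exp (-z)) ^ rh := pow_nonneg b1 rh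
    have hpow2 : 0 ≤ ((1 - p ω) * Real.exp z + p ω * Real.exp (-z)) ^ rh := pow_nonneg b2 rh
    nlinarith
  -- measurability and integrability
  have hfmeas : Measurable (fun ω => p ω * (p ω * Real.exp z + (1 - p ω) * Real.exp (-z)) ^ rh
      + (1 - p ω) * ((1 - p ω) * Real.exp z + p ω * Real.exp (-z)) ^ rh) := by
    fun_prop
  have hInt1 : Integrable (fun ω => p ω * (p ω * Real.exp z + (1 - p ω) * Real.exp (-z)) ^ rh
      + (1 - p ω) * ((1 - p ω) * Real.exp z + p ω * Real.exp (-z)) ^ rh) P := by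
    apply Integrable.mono' (integrable_const (2 * Real.exp |z| ^ rh))
      hfmeas.aestronglyMeasurable
    filter_upwards with ω
    rw [Real.norm_eq_abs, abs_of_nonneg (hf_nonneg ω)]
    exact hf_bdd ω
  have hsq_meas : Measurable (fun ω => (2 * p ω - 1) ^ 2) := by fun_prop
  have hsq_int : Integrable (fun ω => (2 * p ω - 1) ^ 2) P := by
    apply Integrable.mono' (integrable_const 1) hsq_meas.aestronglyMeasurable
    filter_upwards with ω
    obtain ⟨h0, h1⟩ := hp ω
    rw [Real.norm_eq_abs, abs_of_nonneg (sq_nonneg _)]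
    nlinarith
  have hInt2 : Integrable (fun ω => A + (φ * A) * (2 * p ω - 1) ^ 2) P :=
    (integrable_const A).add (hsq_int.const_mul (φ * A))
  -- integrate
  have hmono := integral_mono hInt1 hInt2 key
  have hInt2val : ∫ ω, (A + (φ * A) * (2 * p ω - 1) ^ 2) ∂P = A + (φ * A) * q := by
    rw [integral_add (integrable_const A) (hsq_int.const_mul (φ * A)),
      integral_const, integral_const_mul, hq]
    simp [measure_univ]
  rw [hInt2val] at hmono
  refine le_trans hmono ?_
  -- A + φAq = A(1 + φq) ≤ A exp(φq) = exp(target)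
  have h1 : 1 + φ * q ≤ Real.exp (φ * q) := by
    have := Real.add_one_le_exp (φ * q); linarith
  have h2 : A + (φ * A) * q ≤ A * Real.exp (φ * q) := by
    have := mul_le_mul_of_nonneg_left h1 hA_pos.le
    calc A + (φ * A) * q = A * (1 + φ * q) := by ring
      _ ≤ A * Real.exp (φ * q) := this
  refine le_trans h2 ?_
  rw [hA_def, ← Real.exp_add]
  apply le_of_eq
  congr 1
  rw [hφ_def]
  push_cast
  ring
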